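/- Let R = (Σ, I, T) be a regular transition system where the transducer T has n_T states, and let V be a deterministic interpreter over Σ×Γ with n_V states. Then there exists an NFA over Γ whose state type has cardinality at most n_T·n_V² and whose language is the complement of Inductive(V), i.e., the set of all W ∈ Γ* such that there exist u, w ∈ Σ* with u ⇝ w, u ⊨_V W and not w ⊨_V W. -/

import Mathlib

/-- A regular transition system: an NFA `I` over `Σ` for the initial
configurations and a transducer (an NFA over `Σ × Σ`) `T` for the transitions. -/
structure RTS (Sig QI QT : Type) where
  I : NFA Sig QI
  T : NFA (Sig × Sig) QT

/-- `w ⇝ u`: the equal-length pair `(w,u)`, identified with the zipped word over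
`Σ × Σ`, is accepted by the transducer. -/
def RTS.Step {Sig QI QT : Type} (R : RTS Sig QI QT) (w u : List Sig) : Prop :=
  w.length = u.length ∧ w.zip u ∈ R.T.accepts

/-- `Reach(R)`: configurations reachable from some initial configuration under the
reflexive-transitive closure of `⇝`. -/
def RTS.Reach {Sig QI QT : Type} (R : RTS Sig QI QT) : Set (List Sig) :=
  { w | ∃ u ∈ R.I.accepts, Relation.ReflTransGen R.Step u w }

/-- `w ⊨_V W`: the equal-length pair `(w, W)`, identified with the zipped word
over `Σ × Γ`, is accepted by the deterministic interpreter `V`. -/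
def Models {Sig Gam QV : Type} (V : DFA (Sig × Gam) QV) (w : List Sig)
    (W : List Gam) : Prop :=
  w.length = W.length ∧ w.zip W ∈ V.accepts

/-- A representation `W ∈ Γ*` is inductive if `u ⇝ w` and `u ⊨_V W` imply
`w ⊨_V W`. -/
def InductiveRep {Sig Gam QI QT QV : Type} (R : RTS Sig QI QT)
    (V : DFA (Sig × Gam) QV) (W : List Gam) : Prop :=
  ∀ u w : List Sig, R.Step u w → Models V u W → Models V w W

/-- `u ⇝*_V w`: every inductive representation satisfied by `u` is satisfied
by `w`. -/
def PotReachV {Sig Gam QI QT QV : Type} (R : RTS Sig QI QT)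
    (V : DFA (Sig × Gam) QV) (u w : List Sig) : Prop :=
  ∀ W : List Gam, InductiveRep R V W → Models V u W → Models V w W

/-- `Ind_V(R) = { w : u ⇝*_V w for some initial configuration u }`. -/
def IndV {Sig Gam QI QT QV : Type} (R : RTS Sig QI QT)
    (V : DFA (Sig × Gam) QV) : Set (List Sig) :=
  { w | ∃ u ∈ R.I.accepts, PotReachV R V u w }

/-- The product NFA tracking a run of the transducer `T` on `(u,w)` and the two
deterministic runs of `V` on `(u,W)` and `(w,W)`, while reading only `W`. -/
def prodNFA {Sig Gam QT QV : Type} (T : NFA (Sig × Sig) QT)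
    (V : DFA (Sig × Gam) QV) : NFA Gam (QT × QV × QV) where
  step := fun s g =>
    { s' | ∃ a b : Sig, s'.1 ∈ T.step s.1 (a, b) ∧
        s'.2.1 = V.step s.2.1 (a, g) ∧ s'.2.2 = V.step s.2.2 (b, g) }
  start := { s | s.1 ∈ T.start ∧ s.2.1 = V.start ∧ s.2.2 = V.start }
  accept := { s | s.1 ∈ T.accept ∧ s.2.1 ∈ V.accept ∧ s.2.2 ∉ V.accept }

lemma prodNFA_evalFrom {Sig Gam QT QV : Type} (T : NFA (Sig × Sig) QT)
    (V : DFA (Sig × Gam) QV) (W : List Gam) (s : QT × QV × QV) :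
    s ∈ (prodNFA T V).evalFrom (prodNFA T V).start W ↔
      ∃ u w : List Sig, u.length = W.length ∧ w.length = W.length ∧
        s.1 ∈ T.evalFrom T.start (u.zip w) ∧
        s.2.1 = V.evalFrom V.start (u.zip W) ∧
        s.2.2 = V.evalFrom V.start (w.zip W) := by
  induction W using List.reverseRecOn generalizing s with
  | nil =>
    simp only [NFA.evalFrom_nil]
    constructor
    · rintro ⟨h1, h2, h3⟩
      exact ⟨[], [], rfl, rfl, by simpa using h1, by simpa using h2,
        by simpa using h3⟩
    · rintro ⟨u, w, hu, hw, h1, h2, h3⟩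
      simp only [List.length_nil, List.length_eq_zero_iff] at hu hw
      subst hu; subst hw
      exact ⟨by simpa using h1, by simpa using h2, by simpa using h3⟩
  | append_singleton W g ih =>
    rw [NFA.evalFrom_append, NFA.evalFrom_singleton, NFA.mem_stepSet]
    constructor
    · rintro ⟨t, ht, a, b, h1, h2, h3⟩
      obtain ⟨u, w, hu, hw, e1, e2, e3⟩ := (ih t).mp ht
      have z1 : (u ++ [a]).zip (w ++ [b]) = u.zip w ++ [(a, b)] := by
        rw [List.zip_append (hu.trans hw.symm)]; rfl
      have z2 : (u ++ [a]).zip (W ++ [g]) = u.zip W ++ [(a, g)] := by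
        rw [List.zip_append hu]; rfl
      have z3 : (w ++ [b]).zip (W ++ [g]) = w.zip W ++ [(b, g)] := by
        rw [List.zip_append hw]; rfl
      refine ⟨u ++ [a], w ++ [b], by simp [hu], by simp [hw], ?_, ?_, ?_⟩
      · rw [z1, NFA.evalFrom_append, NFA.evalFrom_singleton, NFA.mem_stepSet]
        exact ⟨t.1, e1, h1⟩
      · rw [z2, DFA.evalFrom_append_singleton, ← e2, h2]
      · rw [z3, DFA.evalFrom_append_singleton, ← e3, h3]
    · rintro ⟨u, w, hu, hw, e1, e2, e3⟩
      -- split off the last letters of u and w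
      have hu' : u ≠ [] := by rintro rfl; simp at hu
      have hw' : w ≠ [] := by rintro rfl; simp at hw
      obtain ⟨u', a, rfl⟩ := (u.eq_nil_or_concat' ).resolve_left hu'
      obtain ⟨w', b, rfl⟩ := (w.eq_nil_or_concat' ).resolve_left hw'
      simp only [List.length_append, List.length_singleton] at hu hw
      have hu2 : u'.length = W.length := by omega
      have hw2 : w'.length = W.length := by omega
      have z1 : (u' ++ [a]).zip (w' ++ [b]) = u'.zip w' ++ [(a, b)] := by
        rw [List.zip_append (hu2.trans hw2.symm)]; rfl
      have z2 : (u' ++ [a]).zip (W ++ [g]) = u'.zip W ++ [(a, g)] := by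
        rw [List.zip_append hu2]; rfl
      have z3 : (w' ++ [b]).zip (W ++ [g]) = w'.zip W ++ [(b, g)] := by
        rw [List.zip_append hw2]; rfl
      rw [z1, NFA.evalFrom_append, NFA.evalFrom_singleton, NFA.mem_stepSet] at e1
      rw [z2, DFA.evalFrom_append_singleton] at e2
      rw [z3, DFA.evalFrom_append_singleton] at e3
      obtain ⟨t, ht, hstep⟩ := e1
      refine ⟨(t, V.evalFrom V.start (u'.zip W), V.evalFrom V.start (w'.zip W)),
        (ih _).mpr ⟨u', w', hu2, hw2, ht, rfl, rfl⟩, a, b, hstep, e2, e3⟩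

/-- Lemma `lem:inv-inductive-inv`: there is an NFA over `Γ` with at
most `n_T · n_V²` states recognizing the complement of `Inductive(V)`, i.e. the
set of representations `W` for which some transition `u ⇝ w` has `u ⊨_V W` but
not `w ⊨_V W`. -/
theorem nfa_for_nonInductive_reps
    {Sig Gam QI QT QV : Type} [Fintype Sig] [Fintype Gam]
    [Fintype QI] [Fintype QT] [Fintype QV]
    (R : RTS Sig QI QT) (V : DFA (Sig × Gam) QV) :
    ∃ (Q : Type) (_ : Fintype Q) (B : NFA Gam Q),
      Fintype.card Q ≤ Fintype.card QT * Fintype.card QV ^ 2 ∧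
      ∀ W : List Gam,
        W ∈ B.accepts ↔
          ∃ u w : List Sig, R.Step u w ∧ Models V u W ∧ ¬ Models V w W := by
  refine ⟨QT × QV × QV, inferInstance, prodNFA R.T V, ?_, ?_⟩
  · apply le_of_eq
    simp [Fintype.card_prod, sq, mul_assoc]
  · intro W
    rw [NFA.mem_accepts]
    constructor
    · rintro ⟨s, ⟨hT, hp, hq⟩, hs⟩
      obtain ⟨u, w, hu, hw, e1, e2, e3⟩ := (prodNFA_evalFrom R.T V W s).mp hs
      refine ⟨u, w, ⟨hu.trans hw.symm, NFA.mem_accepts.mpr ⟨s.1, hT, e1⟩⟩,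
        ⟨hu, ?_⟩, ?_⟩
      · show V.eval (u.zip W) ∈ V.accept
        rw [DFA.eval, ← e2]; exact hp
      · rintro ⟨-, hacc⟩
        exact hq (e3 ▸ hacc)
    · rintro ⟨u, w, ⟨hlen, hT⟩, ⟨hu, huA⟩, hnw⟩
      have hw : w.length = W.length := hlen ▸ hu
      have hwA : w.zip W ∉ V.accepts := fun h => hnw ⟨hw, h⟩
      obtain ⟨t, ht, he⟩ := NFA.mem_accepts.mp hT
      refine ⟨(t, V.evalFrom V.start (u.zip W), V.evalFrom V.start (w.zip W)),
        ⟨ht, huA, hwA⟩,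
        (prodNFA_evalFrom R.T V W _).mpr ⟨u, w, hu, hw, he, rfl, rfl⟩⟩
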